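/- Let k be a field, A a Z-graded commutative k-algebra, and R any commutative k-algebra. Grade R[t] with R in degree 0 and deg t = 1, and grade R[s] with R in degree 0 and deg s = -1. Then the set of pairs (phi_plus, phi_minus), where phi_plus : A -> R[t] and phi_minus : A -> R[s] are graded k-algebra homomorphisms whose compositions with the evaluations t |-> 1 and s |-> 1 yield the same k-algebra homomorphism A -> R, is in natural bijection with the set of k-algebra homomorphisms A^0 -> R, where A^0 is the quotient of A by the ideal generated by all homogeneous elements of nonzero degree. The bijection sends (phi_plus, phi_minus) to the common evaluation A -> R (which automatically kills all homogeneous elements of nonzero degree). -/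

import Mathlib

/-- `φ : A →ₐ[k] R[t]` is graded, where `R[t]` has `R` in degree `0` and `deg t = 1`. -/
def IsGradedToPoly {k A R : Type*} [CommSemiring k] [CommRing A] [Algebra k A]
    [CommRing R] [Algebra k R] (𝒜 : ℤ → Submodule k A) (φ : A →ₐ[k] Polynomial R) : Prop :=
  ∀ n : ℤ, ∀ a ∈ 𝒜 n,
    if 0 ≤ n then ∃ r : R, φ a = Polynomial.C r * Polynomial.X ^ n.toNat
    else φ a = 0

/-- `φ : A →ₐ[k] R[s]` is graded, where `R[s]` has `R` in degree `0` and `deg s = -1`. -/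
def IsGradedToPolyNeg {k A R : Type*} [CommSemiring k] [CommRing A] [Algebra k A]
    [CommRing R] [Algebra k R] (𝒜 : ℤ → Submodule k A) (φ : A →ₐ[k] Polynomial R) : Prop :=
  ∀ n : ℤ, ∀ a ∈ 𝒜 n,
    if n ≤ 0 then ∃ r : R, φ a = Polynomial.C r * Polynomial.X ^ (-n).toNat
    else φ a = 0

/-- Composition with the evaluation at `1`, as a `k`-algebra homomorphism. -/
noncomputable def evalOne (k R : Type*) [CommSemiring k] [CommRing R] [Algebra k R] :
    Polynomial R →ₐ[k] R :=
  (Polynomial.aeval (1 : R)).restrictScalars k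

/-- The ideal of `A` generated by all homogeneous elements of nonzero degree. -/
def nonzeroDegIdeal {k A : Type*} [CommSemiring k] [CommRing A] [Algebra k A]
    (𝒜 : ℤ → Submodule k A) : Ideal A :=
  Ideal.span {a : A | ∃ n : ℤ, n ≠ 0 ∧ a ∈ 𝒜 n}

/-- Two algebra homs from a graded algebra agreeing on every graded piece are equal. -/
lemma algHom_ext_of_graded {k A B : Type*} [CommSemiring k] [CommRing A] [Algebra k A]
    [Semiring B] [Algebra k B] (𝒜 : ℤ → Submodule k A) [GradedAlgebra 𝒜]
    (f g : A →ₐ[k] B) (h : ∀ n, ∀ a ∈ 𝒜 n, f a = g a) : f = g := by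
  have htop : (⊤ : Submodule k A) ≤ LinearMap.eqLocus f.toLinearMap g.toLinearMap := by
    rw [← (DirectSum.Decomposition.isInternal 𝒜).submodule_iSup_eq_top]
    exact iSup_le fun n a ha => h n a ha
  ext a
  exact htop (Submodule.mem_top)

lemma evalOne_C_mul_X_pow {k R : Type*} [CommSemiring k] [CommRing R] [Algebra k R]
    (r : R) (m : ℕ) : evalOne k R (Polynomial.C r * Polynomial.X ^ m) = r := by
  simp [evalOne]

/-- Let `k` be a field, `A` a `ℤ`-graded commutative `k`-algebra, `R` a
commutative `k`-algebra.  Pairs `(φ⁺, φ⁻)` of graded homomorphisms `φ⁺ : A → R[t]`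
(`deg t = 1`) and `φ⁻ : A → R[s]` (`deg s = -1`) with the same evaluation `ψ : A → R` at
`t = 1`, `s = 1` correspond bijectively (via `ψ`) to `k`-algebra homomorphisms `A⁰ → R`;
in particular the common evaluation automatically kills all homogeneous elements of
nonzero degree. -/
theorem stmt_2 {k A R : Type*} [Field k] [CommRing A] [Algebra k A]
    (𝒜 : ℤ → Submodule k A) [GradedAlgebra 𝒜] [CommRing R] [Algebra k R] :
    (∀ (φp φm : A →ₐ[k] Polynomial R) (ψ : A →ₐ[k] R),
      IsGradedToPoly 𝒜 φp → IsGradedToPolyNeg 𝒜 φm →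
      (evalOne k R).comp φp = ψ → (evalOne k R).comp φm = ψ →
      ∀ n : ℤ, n ≠ 0 → ∀ a ∈ 𝒜 n, ψ a = 0) ∧
    (∀ ψ : A →ₐ[k] R,
      (∃! p : (A →ₐ[k] Polynomial R) × (A →ₐ[k] Polynomial R),
        IsGradedToPoly 𝒜 p.1 ∧ IsGradedToPolyNeg 𝒜 p.2 ∧
        (evalOne k R).comp p.1 = ψ ∧ (evalOne k R).comp p.2 = ψ) ↔
      ∃! χ : (A ⧸ nonzeroDegIdeal 𝒜) →ₐ[k] R,
        χ.comp (Ideal.Quotient.mkₐ k (nonzeroDegIdeal 𝒜)) = ψ) := by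
  have hkill : ∀ (φp φm : A →ₐ[k] Polynomial R) (ψ : A →ₐ[k] R),
      IsGradedToPoly 𝒜 φp → IsGradedToPolyNeg 𝒜 φm →
      (evalOne k R).comp φp = ψ → (evalOne k R).comp φm = ψ →
      ∀ n : ℤ, n ≠ 0 → ∀ a ∈ 𝒜 n, ψ a = 0 := by
    intro φp φm ψ hp hm hep hem n hn a ha
    rcases lt_or_gt_of_ne hn with h | h
    · have h0 := hp n a ha
      rw [if_neg (not_le.mpr h)] at h0
      rw [← hep, AlgHom.comp_apply, h0, map_zero]
    · have h0 := hm n a ha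
      rw [if_neg (not_le.mpr h)] at h0
      rw [← hem, AlgHom.comp_apply, h0, map_zero]
  refine ⟨hkill, fun ψ => ?_⟩
  have hmain : ∀ (_ : ∀ n : ℤ, n ≠ 0 → ∀ a ∈ 𝒜 n, ψ a = 0),
      ∃! p : (A →ₐ[k] Polynomial R) × (A →ₐ[k] Polynomial R),
        IsGradedToPoly 𝒜 p.1 ∧ IsGradedToPolyNeg 𝒜 p.2 ∧
        (evalOne k R).comp p.1 = ψ ∧ (evalOne k R).comp p.2 = ψ := by
    intro hk
    set Cψ : A →ₐ[k] Polynomial R :=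
      ((Polynomial.CAlgHom (R := R) (A := R)).restrictScalars k).comp ψ with hCψ
    have hCψa : ∀ a : A, Cψ a = Polynomial.C (ψ a) := fun a => rfl
    have hCgr : ∀ n : ℤ, ∀ a ∈ 𝒜 n, n ≠ 0 → Cψ a = 0 := by
      intro n a ha hn
      rw [hCψa, hk n hn a ha, map_zero]
    have hgrp : IsGradedToPoly 𝒜 Cψ := by
      intro n a ha
      split_ifs with h
      · rcases eq_or_ne n 0 with rfl | hn
        · exact ⟨ψ a, by simp [hCψa]⟩
        · exact ⟨0, by rw [hCgr n a ha hn]; simp⟩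
      · exact hCgr n a ha (by omega)
    have hgrm : IsGradedToPolyNeg 𝒜 Cψ := by
      intro n a ha
      split_ifs with h
      · rcases eq_or_ne n 0 with rfl | hn
        · exact ⟨ψ a, by simp [hCψa]⟩
        · exact ⟨0, by rw [hCgr n a ha hn]; simp⟩
      · exact hCgr n a ha (by omega)
    have heval : (evalOne k R).comp Cψ = ψ := by
      ext a
      rw [AlgHom.comp_apply, hCψa]
      simp [evalOne]
    refine ⟨⟨Cψ, Cψ⟩, ⟨hgrp, hgrm, heval, heval⟩, ?_⟩
    rintro ⟨φp, φm⟩ ⟨hp, hm, hep, hem⟩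
    have hk' := hkill φp φm ψ hp hm hep hem
    have h1 : φp = Cψ := by
      refine algHom_ext_of_graded 𝒜 _ _ (fun n a ha => ?_)
      by_cases h : 0 ≤ n
      · obtain ⟨r, hr⟩ := by have := hp n a ha; rwa [if_pos h] at this
        have hrψ : ψ a = r := by
          rw [← hep, AlgHom.comp_apply, hr, evalOne_C_mul_X_pow]
        rcases eq_or_ne n 0 with rfl | hn
        · rw [hr, hCψa, hrψ]; simp
        · have : ψ a = 0 := hk' n hn a ha
          rw [hr, ← hrψ, this, hCψa, this]; simp
      · have h0 := hp n a ha
        rw [if_neg h] at h0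
        rw [h0, hCgr n a ha (by omega)]
    have h2 : φm = Cψ := by
      refine algHom_ext_of_graded 𝒜 _ _ (fun n a ha => ?_)
      by_cases h : n ≤ 0
      · obtain ⟨r, hr⟩ := by have := hm n a ha; rwa [if_pos h] at this
        have hrψ : ψ a = r := by
          rw [← hem, AlgHom.comp_apply, hr, evalOne_C_mul_X_pow]
        rcases eq_or_ne n 0 with rfl | hn
        · rw [hr, hCψa, hrψ]; simp
        · have : ψ a = 0 := hk' n hn a ha
          rw [hr, ← hrψ, this, hCψa, this]; simp
      · have h0 := hm n a ha
        rw [if_neg h] at h0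
        rw [h0, hCgr n a ha (by omega)]
    exact Prod.ext h1 h2
  constructor
  · rintro ⟨⟨φp, φm⟩, ⟨hp, hm, hep, hem⟩, -⟩
    have hk := hkill φp φm ψ hp hm hep hem
    have hle : nonzeroDegIdeal 𝒜 ≤ RingHom.ker ψ := by
      rw [nonzeroDegIdeal, Ideal.span_le]
      rintro a ⟨n, hn, ha⟩
      exact hk n hn a ha
    refine ⟨Ideal.Quotient.liftₐ _ ψ (fun a ha => hle ha), ?_, ?_⟩
    · ext a
      rfl
    · intro χ hχ
      refine Ideal.Quotient.algHom_ext k ?_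
      rw [show Ideal.Quotient.mkₐ k (nonzeroDegIdeal 𝒜) = Ideal.Quotient.mkₐ _ _ from rfl,
        hχ]
      ext a
      rfl
  · rintro ⟨χ, hχ, -⟩
    refine hmain (fun n hn a ha => ?_)
    have hz : (Ideal.Quotient.mkₐ k (nonzeroDegIdeal 𝒜)) a = 0 := by
      rw [Ideal.Quotient.mkₐ_eq_mk, Ideal.Quotient.eq_zero_iff_mem]
      exact Ideal.subset_span ⟨n, hn, ha⟩
    rw [← hχ, AlgHom.comp_apply, hz, map_zero]
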